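/- Let X be a compact metric space, f : X → X a continuous map, μ an f-invariant Borel probability measure on X, and L : C(X;ℝ) → C(X;ℝ) a linear operator such that: (i) ∫ L(g) dμ = ∫ g dμ for all g ∈ C(X;ℝ); (ii) L((g∘f)·h) = g·L(h) for all g, h ∈ C(X;ℝ); and (iii) for every g ∈ C(X;ℝ), Lⁿ(g) converges uniformly on X to the constant ∫ g dμ. Then μ is mixing of all orders: for every integer r ≥ 1 and all g₀, g₁, …, g_r ∈ C(X;ℝ), the integral ∫ g₀·(g₁∘f^{n₁})·(g₂∘f^{n₂})⋯(g_r∘f^{n_r}) dμ, taken over integer times with 0 = n₀ ≤ n₁ ≤ ⋯ ≤ n_r, converges to ∏_{j=0}^{r} ∫ g_j dμ as min_{0≤j<r}(n_{j+1} − n_j) → ∞. -/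

import Mathlib

open MeasureTheory Filter

/-- The key dual identity: `∫ h · (G ∘ f^[m]) dμ = ∫ G · (Lᵐ h) dμ`, proved by induction
on `m` from properties (i) and (ii) of `L`. -/
lemma stmt_13_key {X : Type*} [MetricSpace X] [CompactSpace X]
    [MeasurableSpace X] [BorelSpace X]
    (f : X → X) (hf : Continuous f)
    (μ : Measure X) [IsProbabilityMeasure μ]
    (L : C(X, ℝ) →ₗ[ℝ] C(X, ℝ))
    (hint : ∀ g : C(X, ℝ), ∫ x, (L g) x ∂μ = ∫ x, g x ∂μ)
    (hhom : ∀ g h : C(X, ℝ), L ((g.comp ⟨f, hf⟩) * h) = g * L h) :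
    ∀ (m : ℕ) (h G : C(X, ℝ)),
      ∫ x, h x * G (f^[m] x) ∂μ = ∫ x, G x * ((L ^ m) h) x ∂μ := by
  intro m
  induction m with
  | zero =>
    intro h G
    simp [mul_comm]
  | succ m ih =>
    intro h G
    have e1 : (fun x => h x * G (f^[m + 1] x))
        = fun x => (((G.comp ⟨f^[m], hf.iterate m⟩).comp ⟨f, hf⟩) * h) x := by
      funext x
      simp [Function.iterate_succ_apply, mul_comm]
    calc ∫ x, h x * G (f^[m + 1] x) ∂μ
        = ∫ x, (((G.comp ⟨f^[m], hf.iterate m⟩).comp ⟨f, hf⟩) * h) x ∂μ := by rw [e1]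
      _ = ∫ x, (L (((G.comp ⟨f^[m], hf.iterate m⟩).comp ⟨f, hf⟩) * h)) x ∂μ :=
          (hint _).symm
      _ = ∫ x, ((G.comp ⟨f^[m], hf.iterate m⟩) * L h) x ∂μ := by rw [hhom]
      _ = ∫ x, (L h) x * G (f^[m] x) ∂μ := by
          apply integral_congr_ae
          filter_upwards with x
          simp [mul_comm]
      _ = ∫ x, G x * ((L ^ m) (L h)) x ∂μ := ih (L h) G
      _ = ∫ x, G x * ((L ^ (m + 1)) h) x ∂μ := by
          rw [pow_succ]
          rfl

/-- first part of Proposition 4.5 of the paper, abstract form. Let `X`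
be a compact metric space, `f : X → X` continuous, `μ` an `f`-invariant Borel probability
measure and `L` a linear operator on `C(X, ℝ)` with `∫ L g dμ = ∫ g dμ`,
`L((g∘f)·h) = g·L h`, and `Lⁿ g → ∫ g dμ` uniformly for every `g`. Then `μ` is mixing of
all orders: for `0 = n₀ ≤ n₁ ≤ ⋯ ≤ n_r`,
`∫ g₀ (g₁∘f^{n₁}) ⋯ (g_r∘f^{n_r}) dμ → ∏ ∫ g_j dμ` as `min (n_{j+1} - n_j) → ∞`. -/
theorem stmt_13 {X : Type*} [MetricSpace X] [CompactSpace X]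
    [MeasurableSpace X] [BorelSpace X]
    (f : X → X) (hf : Continuous f)
    (μ : Measure X) [IsProbabilityMeasure μ] (hinv : μ.map f = μ)
    (L : C(X, ℝ) →ₗ[ℝ] C(X, ℝ))
    (hint : ∀ g : C(X, ℝ), ∫ x, (L g) x ∂μ = ∫ x, g x ∂μ)
    (hhom : ∀ g h : C(X, ℝ), L ((g.comp ⟨f, hf⟩) * h) = g * L h)
    (hconv : ∀ g : C(X, ℝ),
      TendstoUniformly (fun n : ℕ => fun x : X => ((L ^ n) g) x)
        (fun _ : X => ∫ x, g x ∂μ) atTop) :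
    ∀ r : ℕ, 1 ≤ r → ∀ g : Fin (r + 1) → C(X, ℝ), ∀ ε : ℝ, 0 < ε →
      ∃ N : ℕ, ∀ n : Fin (r + 1) → ℕ, n 0 = 0 → Monotone n →
        (∀ j : Fin r, N ≤ n j.succ - n j.castSucc) →
        |(∫ x, ∏ j : Fin (r + 1), (g j) (f^[n j] x) ∂μ) -
            ∏ j : Fin (r + 1), ∫ x, (g j) x ∂μ| ≤ ε := by
  have hInt : ∀ h : C(X, ℝ), Integrable (fun x => h x) μ := fun h => by
    exact (BoundedContinuousFunction.mkOfCompact h).integrable μ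
  suffices H : ∀ r : ℕ, ∀ g : Fin (r + 1) → C(X, ℝ), ∀ ε : ℝ, 0 < ε →
      ∃ N : ℕ, ∀ n : Fin (r + 1) → ℕ, n 0 = 0 → Monotone n →
        (∀ j : Fin r, N ≤ n j.succ - n j.castSucc) →
        |(∫ x, ∏ j : Fin (r + 1), (g j) (f^[n j] x) ∂μ) -
            ∏ j : Fin (r + 1), ∫ x, (g j) x ∂μ| ≤ ε by
    exact fun r _ => H r
  intro r
  induction r with
  | zero =>
    intro g ε hε
    refine ⟨0, fun n hn0 _ _ => ?_⟩
    simp [Fin.prod_univ_one, hn0, hε.le]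
  | succ r ih =>
    intro g ε hε
    set g' : Fin (r + 1) → C(X, ℝ) := fun j => g j.succ with hg'
    set c0 : ℝ := ∫ x, (g 0) x ∂μ with hc0
    set B : ℝ := ∏ j : Fin (r + 1), ‖g j.succ‖ with hB
    have hB0 : 0 ≤ B := Finset.prod_nonneg fun _ _ => norm_nonneg _
    obtain ⟨N1, hN1⟩ := ih g' (ε / (2 * (|c0| + 1))) (by positivity)
    have hδ : (0 : ℝ) < ε / (2 * (B + 1)) := by positivity
    have hc := (Metric.tendstoUniformly_iff.mp (hconv (g 0))) (ε / (2 * (B + 1))) hδ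
    obtain ⟨N0, hN0⟩ := eventually_atTop.mp hc
    refine ⟨max N0 N1, fun n hn0 hmono hgap => ?_⟩
    -- the first gap gives `n 1 ≥ N0`
    have hgap0 := hgap 0
    have h01 : (0 : Fin (r + 1)).succ = (1 : Fin (r + 2)) := rfl
    have h00 : (0 : Fin (r + 1)).castSucc = (0 : Fin (r + 2)) := rfl
    have hn1N0 : N0 ≤ n 1 := by
      rw [h01, h00, hn0] at hgap0
      omega
    have hn1N1le : N1 ≤ max N0 N1 := le_max_right _ _
    -- shifted times
    have hle : ∀ j : Fin (r + 1), n 1 ≤ n j.succ := by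
      intro j
      apply hmono
      rw [Fin.le_def]
      simpa using Nat.succ_le_succ (Nat.zero_le _)
    set m : Fin (r + 1) → ℕ := fun j => n j.succ - n 1 with hm
    have hm0 : m 0 = 0 := by simp [hm, h01]
    have hmmono : Monotone m := fun a b hab =>
      Nat.sub_le_sub_right (hmono (Fin.succ_le_succ_iff.mpr hab)) _
    have hmgap : ∀ j : Fin r, N1 ≤ m j.succ - m j.castSucc := by
      intro j
      have h1 := hgap j.succ
      have e : (j.castSucc).succ = (j.succ).castSucc := Fin.succ_castSucc j
      have h2 : n 1 ≤ n (j.succ).castSucc := by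
        rw [← e]; exact hle j.castSucc
      have h3 : n (j.succ).castSucc ≤ n (j.succ).succ := hmono (Fin.castSucc_le_succ _)
      have h4 : m j.succ - m j.castSucc = n (j.succ).succ - n (j.succ).castSucc := by
        simp only [hm, e]
        omega
      omega
    -- the continuous function H
    set H : C(X, ℝ) :=
      ∏ j : Fin (r + 1), (g' j).comp ⟨f^[m j], hf.iterate (m j)⟩ with hH
    have hHx : ∀ x, H x = ∏ j : Fin (r + 1), g' j (f^[m j] x) := by
      intro x
      rw [hH, ContinuousMap.prod_apply]
      rfl
    -- product decomposition
    have hprod : ∀ x, ∏ j : Fin (r + 1 + 1), (g j) (f^[n j] x)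
        = (g 0) x * H (f^[n 1] x) := by
      intro x
      rw [Fin.prod_univ_succ, hn0, hHx]
      simp only [Function.iterate_zero, id_eq]
      congr 1
      apply Finset.prod_congr rfl
      intro j _
      have : f^[m j] (f^[n 1] x) = f^[m j + n 1] x :=
        (Function.iterate_add_apply f (m j) (n 1) x).symm
      rw [this, Nat.sub_add_cancel (hle j)]
    -- pointwise bound on H
    have hHbound : ∀ x, |H x| ≤ B := by
      intro x
      rw [hHx]
      calc |∏ j : Fin (r + 1), g' j (f^[m j] x)|
          = ∏ j : Fin (r + 1), |g' j (f^[m j] x)| := Finset.abs_prod _ _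
        _ ≤ ∏ j : Fin (r + 1), ‖g j.succ‖ := by
            apply Finset.prod_le_prod (fun _ _ => abs_nonneg _)
            intro j _
            exact (g' j).norm_coe_le_norm _
    -- the main integral identity
    have hkey : ∫ x, ∏ j : Fin (r + 1 + 1), (g j) (f^[n j] x) ∂μ
        = ∫ x, H x * ((L ^ (n 1)) (g 0)) x ∂μ := by
      calc ∫ x, ∏ j : Fin (r + 1 + 1), (g j) (f^[n j] x) ∂μ
          = ∫ x, (g 0) x * H (f^[n 1] x) ∂μ := by
            apply integral_congr_ae
            filter_upwards with x using hprod x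
        _ = ∫ x, H x * ((L ^ (n 1)) (g 0)) x ∂μ :=
            stmt_13_key f hf μ L hint hhom (n 1) (g 0) H
    -- bound the first error term
    have hd : ∀ x, |((L ^ (n 1)) (g 0)) x - c0| < ε / (2 * (B + 1)) := by
      intro x
      have := hN0 (n 1) hn1N0 x
      rw [Real.dist_eq] at this
      rw [abs_sub_comm]
      exact this
    have hterm1 : |(∫ x, H x * ((L ^ (n 1)) (g 0)) x ∂μ) - c0 * (∫ x, H x ∂μ)| ≤ ε / 2 := by
      have hsub : (∫ x, H x * ((L ^ (n 1)) (g 0)) x ∂μ) - c0 * (∫ x, H x ∂μ)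
          = ∫ x, H x * (((L ^ (n 1)) (g 0)) x - c0) ∂μ := by
        rw [show c0 * (∫ x, H x ∂μ) = ∫ x, H x * c0 ∂μ by
          rw [integral_mul_const]; ring]
        have hi1 : Integrable (fun x => H x * ((L ^ (n 1)) (g 0)) x) μ := by
          simpa using hInt (H * (L ^ (n 1)) (g 0))
        rw [← integral_sub hi1 ((hInt H).mul_const c0)]
        apply integral_congr_ae
        filter_upwards with x
        ring
      rw [hsub]
      have hbd : ∀ x, ‖H x * (((L ^ (n 1)) (g 0)) x - c0)‖ ≤ B * (ε / (2 * (B + 1))) := by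
        intro x
        rw [Real.norm_eq_abs, abs_mul]
        exact mul_le_mul (hHbound x) (hd x).le (abs_nonneg _) hB0
      have := norm_integral_le_of_norm_le_const (μ := μ)
        (f := fun x => H x * (((L ^ (n 1)) (g 0)) x - c0))
        (C := B * (ε / (2 * (B + 1)))) (Filter.Eventually.of_forall hbd)
      simp only [measure_univ, probReal_univ, ENNReal.toReal_one, mul_one] at this
      calc |∫ x, H x * (((L ^ (n 1)) (g 0)) x - c0) ∂μ|
          ≤ B * (ε / (2 * (B + 1))) := this
        _ ≤ (B + 1) * (ε / (2 * (B + 1))) := by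
            apply mul_le_mul_of_nonneg_right (by linarith) hδ.le
        _ = ε / 2 := by field_simp
    -- bound the second error term via the inductive hypothesis
    have hihm := hN1 m hm0 hmmono (fun j => le_trans hn1N1le (by
      have := hgap j.succ
      have e : (j.castSucc).succ = (j.succ).castSucc := Fin.succ_castSucc j
      have h2 : n 1 ≤ n (j.succ).castSucc := by rw [← e]; exact hle j.castSucc
      have h3 : n (j.succ).castSucc ≤ n (j.succ).succ := hmono (Fin.castSucc_le_succ _)
      have h4 : m j.succ - m j.castSucc = n (j.succ).succ - n (j.succ).castSucc := by
        simp only [hm, e]; omega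
      omega))
    have hHint : ∫ x, H x ∂μ = ∫ x, ∏ j : Fin (r + 1), g' j (f^[m j] x) ∂μ := by
      apply integral_congr_ae
      filter_upwards with x using hHx x
    have hterm2 : |(∫ x, H x ∂μ) - ∏ j : Fin (r + 1), ∫ x, (g' j) x ∂μ|
        ≤ ε / (2 * (|c0| + 1)) := by
      rw [hHint]
      exact hihm
    -- combine
    have hsplit : ∏ j : Fin (r + 1 + 1), ∫ x, (g j) x ∂μ
        = c0 * ∏ j : Fin (r + 1), ∫ x, (g' j) x ∂μ := by
      rw [Fin.prod_univ_succ]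
    rw [hkey, hsplit]
    set A := ∫ x, H x * ((L ^ (n 1)) (g 0)) x ∂μ
    set IH := ∫ x, H x ∂μ
    set P := ∏ j : Fin (r + 1), ∫ x, (g' j) x ∂μ
    have : A - c0 * P = (A - c0 * IH) + c0 * (IH - P) := by ring
    rw [this]
    calc |(A - c0 * IH) + c0 * (IH - P)|
        ≤ |A - c0 * IH| + |c0 * (IH - P)| := abs_add_le _ _
      _ ≤ ε / 2 + |c0| * (ε / (2 * (|c0| + 1))) := by
          apply add_le_add hterm1
          rw [abs_mul]
          exact mul_le_mul_of_nonneg_left hterm2 (abs_nonneg _)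
      _ ≤ ε / 2 + (|c0| + 1) * (ε / (2 * (|c0| + 1))) := by
          have : (0:ℝ) < ε / (2 * (|c0| + 1)) := by positivity
          have h2 : |c0| ≤ |c0| + 1 := by linarith
          nlinarith [abs_nonneg c0]
      _ = ε := by
          have : (|c0| + 1) * (ε / (2 * (|c0| + 1))) = ε / 2 := by
            field_simp
          rw [this]; ring
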